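/- No word producible by the counter-increase predicate contains ### as a factor: let Σ = {0,#}, and let L(y₁) = {ε} ∪ { 0w0#0 : w ∈ Σ*, w has no factor ### }, L(y₂) = {ε} ∪ { 0⁴ # 0⁵ 0^{2a} ## 0^{b} # 0⁴ 0^{2+2c} : a ≥ 0, b ≥ 1, c ≥ 1 }, L(y₃) = {ε} ∪ { 0#0w0 : w ∈ Σ*, w has no factor ### }, and L(x₁) = ({00})*. Then every word in the concatenation language L(y₁)·L(x₁)·L(y₂)·L(x₁)·L(y₃) contains no occurrence of ### as a factor. -/

import Mathlib

open Computability

/-- The binary alphabet `{0, #}`: `false` represents `0`, `true` represents `#`. -/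
abbrev Bin := Bool

/-- `u` contains no occurrence of `###` as a factor. -/
def NoTripleHash (u : List Bin) : Prop := ¬ ([true, true, true] <:+: u)

/-- `L(x₁) = ({00})*`: all words that are concatenations of blocks `00`. -/
def Lx1 : Language Bin := ({[false, false]} : Set (List Bin))∗

/-- `L(y₁) = {ε} ∪ { 0w0#0 : w ∈ Σ*, w has no factor ### }`. -/
def Ly1 : Language Bin :=
  (({[]} : Set (List Bin)) ∪ {x | ∃ w, NoTripleHash w ∧ x = [false] ++ w ++ [false, true, false]} : Set (List Bin))

/-- `L(y₂) = {ε} ∪ { 0⁴ # 0⁵ 0^{2a} ## 0^{b} # 0⁴ 0^{2+2c} : a ≥ 0, b ≥ 1, c ≥ 1 }`. -/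
def Ly2 : Language Bin :=
  (({[]} : Set (List Bin)) ∪ {x | ∃ a b c : ℕ, 1 ≤ b ∧ 1 ≤ c ∧
    x = List.replicate 4 false ++ [true] ++ List.replicate 5 false ++
      List.replicate (2 * a) false ++ [true, true] ++ List.replicate b false ++
      [true] ++ List.replicate 4 false ++ List.replicate (2 + 2 * c) false} : Set (List Bin))

/-- `L(y₃) = {ε} ∪ { 0#0w0 : w ∈ Σ*, w has no factor ### }`. -/
def Ly3 : Language Bin :=
  (({[]} : Set (List Bin)) ∪ {x | ∃ w, NoTripleHash w ∧ x = [false, true, false] ++ w ++ [false]} : Set (List Bin))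

/-! ### Auxiliary lemmas -/

/-- Index characterization of containing `###` as a factor. -/
lemma infix_iff_idx (w : List Bin) : [true,true,true] <:+: w ↔
    ∃ i, ∃ h : i + 2 < w.length,
      w[i]'(by omega) = true ∧ w[i+1]'(by omega) = true ∧ w[i+2]'h = true := by
  constructor
  · rintro ⟨s, t, rfl⟩
    refine ⟨s.length, by simp, ?_, ?_, ?_⟩ <;>
      simp [List.getElem_append]
  · rintro ⟨i, h, h0, h1, h2⟩
    refine ⟨w.take i, w.drop (i+3), ?_⟩
    have d0 : w.drop i = w[i]'(by omega) :: w.drop (i+1) := List.drop_eq_getElem_cons (by omega)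
    have d1 : w.drop (i+1) = w[i+1]'(by omega) :: w.drop (i+2) := List.drop_eq_getElem_cons (by omega)
    have d2 : w.drop (i+2) = w[i+2]'h :: w.drop (i+3) := List.drop_eq_getElem_cons (by omega)
    rw [h0] at d0; rw [h1] at d1; rw [h2] at d2
    calc w.take i ++ [true,true,true] ++ w.drop (i+3)
        = w.take i ++ w.drop i := by rw [d0, d1, d2]; simp
      _ = w := List.take_append_drop i w

/-- Crossing lemma: appending preserves `NoTripleHash` as long as one of the boundary
letters is a `0`. -/
lemma noTripleHash_append {u v : List Bin} (hu : NoTripleHash u) (hv : NoTripleHash v)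
    (hb : u.getLast? = some false ∨ v.head? = some false) : NoTripleHash (u ++ v) := by
  rw [NoTripleHash, infix_iff_idx]
  rintro ⟨i, h, h0, h1, h2⟩
  have hlen : i + 2 < u.length + v.length := by simpa using h
  have key : ∀ {j k : ℕ} (hj : j < (u++v).length) (hk : k < (u++v).length), j = k →
      (u ++ v)[j]'hj = (u ++ v)[k]'hk := by rintro j k hj hk rfl; rfl
  by_cases hc1 : i + 2 < u.length
  · apply hu
    rw [infix_iff_idx]
    refine ⟨i, hc1, ?_, ?_, ?_⟩
    · rw [List.getElem_append_left (by omega : i < u.length)] at h0; exact h0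
    · rw [List.getElem_append_left (by omega : i + 1 < u.length)] at h1; exact h1
    · rw [List.getElem_append_left hc1] at h2; exact h2
  · by_cases hc2 : u.length ≤ i
    · apply hv
      rw [infix_iff_idx]
      refine ⟨i - u.length, by omega, ?_, ?_, ?_⟩
      · rw [List.getElem_append_right hc2] at h0; exact h0
      · rw [List.getElem_append_right (by omega : u.length ≤ i + 1)] at h1
        simp only [show i + 1 - u.length = i - u.length + 1 from by omega] at h1; exact h1
      · rw [List.getElem_append_right (by omega : u.length ≤ i + 2)] at h2
        simp only [show i + 2 - u.length = i - u.length + 2 from by omega] at h2; exact h2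
    · push_neg at hc2
      rcases hb with hb | hb
      · have hne : u ≠ [] := by rintro rfl; simp at hc2
        have hul : 0 < u.length := List.length_pos_iff.mpr hne
        have hlast : u[u.length - 1]'(by omega) = false := by
          rw [List.getLast?_eq_getLast hne] at hb
          simpa [List.getLast_eq_getElem] using hb
        have hget : (u ++ v)[u.length - 1]'(by simp; omega) = false := by
          rw [List.getElem_append_left (by omega)]; exact hlast
        rcases (show u.length - 1 = i ∨ u.length - 1 = i + 1 from by omega) with e | e
        · rw [key _ (by simpa using by omega) e, h0] at hget; simp at hget
        · rw [key _ (by simpa using by omega) e, h1] at hget; simp at hget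
      · have hne : v ≠ [] := by rintro rfl; simp at hlen; omega
        have hvl : 0 < v.length := List.length_pos_iff.mpr hne
        have hhead : v[0]'hvl = false := by
          rw [List.head?_eq_head hne] at hb
          rw [List.getElem_zero hvl]; injection hb
        have hget : (u ++ v)[u.length]'(by simp; omega) = false := by
          rw [List.getElem_append_right (le_refl _)]
          simpa using hhead
        rcases (show u.length = i + 1 ∨ u.length = i + 2 from by omega) with e | e
        · rw [key _ (by simpa using by omega) e, h1] at hget; simp at hget
        · rw [key _ (by simpa using by omega) e, h2] at hget; simp at hget

lemma noTripleHash_append' {u v : List Bin} (hu : NoTripleHash u) (hv : NoTripleHash v)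
    (hb : v.head? = some false ∨ v = []) : NoTripleHash (u ++ v) := by
  rcases hb with hb | rfl
  · exact noTripleHash_append hu hv (Or.inr hb)
  · simpa using hu

lemma nth_rep (n : ℕ) : NoTripleHash (List.replicate n false) := by
  intro h
  have := h.subset (show true ∈ [true,true,true] by simp)
  have := List.eq_of_mem_replicate this
  simp at this

lemma head?_rep (n : ℕ) (hn : 0 < n) : (List.replicate n (false : Bin)).head? = some false := by
  cases n with
  | zero => omega
  | succ m => simp [List.replicate_succ]

lemma head?_rep_append (n : ℕ) (hn : 0 < n) (l : List Bin) :
    (List.replicate n (false : Bin) ++ l).head? = some false := by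
  cases n with
  | zero => omega
  | succ m => simp [List.replicate_succ]

lemma getLast?_rep (n : ℕ) (hn : 0 < n) : (List.replicate n (false : Bin)).getLast? = some false := by
  cases n with
  | zero => omega
  | succ m => rw [List.replicate_succ']; simp

lemma lx1_spec {x : List Bin} (hx : x ∈ Lx1) : ∃ n, x = List.replicate n false := by
  unfold Lx1 at hx; replace hx := Language.mem_kstar.1 hx
  obtain ⟨S, rfl, hS⟩ := hx
  induction S with
  | nil => exact ⟨0, rfl⟩
  | cons a S ih =>
    obtain ⟨n, hn⟩ := ih (fun y hy => hS y (List.mem_cons_of_mem _ hy))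
    have ha : a = [false, false] := hS a (List.mem_cons_self)
    exact ⟨n + 2, by simp [ha, hn, List.replicate_succ]⟩

lemma lx1_spec' {x : List Bin} (hx : x ∈ Lx1) :
    NoTripleHash x ∧ (x.head? = some false ∨ x = []) := by
  obtain ⟨n, rfl⟩ := lx1_spec hx
  refine ⟨nth_rep n, ?_⟩
  rcases Nat.eq_zero_or_pos n with rfl | hn
  · exact Or.inr rfl
  · exact Or.inl (head?_rep n hn)

lemma ly1_spec {x : List Bin} (hx : x ∈ Ly1) :
    NoTripleHash x ∧ (x.head? = some false ∨ x = []) := by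
  rcases hx with hx | ⟨w, hw, rfl⟩
  · simp only [Set.mem_singleton_iff] at hx
    subst hx
    exact ⟨by intro ⟨s, t, h⟩; simp at h, Or.inr rfl⟩
  · constructor
    · rw [List.append_assoc]
      refine noTripleHash_append (by unfold NoTripleHash; decide) ?_ (Or.inl (by decide))
      exact noTripleHash_append hw (by unfold NoTripleHash; decide) (Or.inr rfl)
    · exact Or.inl (by simp)

lemma ly3_spec {x : List Bin} (hx : x ∈ Ly3) :
    NoTripleHash x ∧ (x.head? = some false ∨ x = []) := by
  rcases hx with hx | ⟨w, hw, rfl⟩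
  · simp only [Set.mem_singleton_iff] at hx
    subst hx
    exact ⟨by intro ⟨s, t, h⟩; simp at h, Or.inr rfl⟩
  · constructor
    · rw [List.append_assoc]
      refine noTripleHash_append (by unfold NoTripleHash; decide) ?_ (Or.inl (by decide))
      exact noTripleHash_append hw (by unfold NoTripleHash; decide) (Or.inr rfl)
    · exact Or.inl (by simp)

lemma ly2_spec {x : List Bin} (hx : x ∈ Ly2) :
    NoTripleHash x ∧ (x.head? = some false ∨ x = []) := by
  rcases hx with hx | ⟨a, b, c, hb, hc, rfl⟩
  · simp only [Set.mem_singleton_iff] at hx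
    subst hx
    exact ⟨by intro ⟨s, t, h⟩; simp at h, Or.inr rfl⟩
  · constructor
    · have h8 : NoTripleHash (List.replicate 4 false ++ List.replicate (2 + 2*c) false) :=
        noTripleHash_append (nth_rep _) (nth_rep _) (Or.inr (head?_rep _ (by omega)))
      have h7 : NoTripleHash ([true] ++ (List.replicate 4 false ++ List.replicate (2 + 2*c) false)) :=
        noTripleHash_append (by unfold NoTripleHash; decide) h8 (Or.inr (head?_rep_append 4 (by omega) _))
      have h6 : NoTripleHash (List.replicate b false ++
          ([true] ++ (List.replicate 4 false ++ List.replicate (2 + 2*c) false))) :=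
        noTripleHash_append (nth_rep _) h7 (Or.inl (getLast?_rep b hb))
      have h5 : NoTripleHash ([true, true] ++ (List.replicate b false ++
          ([true] ++ (List.replicate 4 false ++ List.replicate (2 + 2*c) false)))) :=
        noTripleHash_append (by unfold NoTripleHash; decide) h6 (Or.inr (head?_rep_append b hb _))
      have h4 : NoTripleHash (List.replicate (5 + 2*a) false ++ ([true, true] ++
          (List.replicate b false ++ ([true] ++
          (List.replicate 4 false ++ List.replicate (2 + 2*c) false))))) :=
        noTripleHash_append (nth_rep _) h5 (Or.inl (getLast?_rep _ (by omega)))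
      have h3 : NoTripleHash ([true] ++ (List.replicate (5 + 2*a) false ++ ([true, true] ++
          (List.replicate b false ++ ([true] ++
          (List.replicate 4 false ++ List.replicate (2 + 2*c) false)))))) :=
        noTripleHash_append (by unfold NoTripleHash; decide) h4 (Or.inr (head?_rep_append _ (by omega) _))
      have h2 : NoTripleHash (List.replicate 4 false ++ ([true] ++
          (List.replicate (5 + 2*a) false ++ ([true, true] ++
          (List.replicate b false ++ ([true] ++
          (List.replicate 4 false ++ List.replicate (2 + 2*c) false))))))) :=
        noTripleHash_append (nth_rep _) h3 (Or.inl (getLast?_rep _ (by omega)))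
      have heq : List.replicate (5 + 2*a) (false : Bin) =
          List.replicate 5 false ++ List.replicate (2*a) false := List.replicate_add 5 (2*a) false
      convert h2 using 1
      rw [heq]
      simp [List.append_assoc]
    · exact Or.inl (head?_rep_append 4 (by omega) _)

/-- No word producible by the counter-increase predicate contains `###` as a factor. -/
theorem counterIncrease_predicate_noTripleHash :
    ∀ w ∈ Ly1 * Lx1 * Ly2 * Lx1 * Ly3, NoTripleHash w := by
  rintro w ⟨t4, ⟨t3, ⟨t2, ⟨y1, hy1, x1, hx1, rfl⟩, y2, hy2, rfl⟩, x2, hx2, rfl⟩, y3, hy3, rfl⟩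
  obtain ⟨hy1n, _⟩ := ly1_spec hy1
  obtain ⟨hx1n, hx1h⟩ := lx1_spec' hx1
  obtain ⟨hy2n, hy2h⟩ := ly2_spec hy2
  obtain ⟨hx2n, hx2h⟩ := lx1_spec' hx2
  obtain ⟨hy3n, hy3h⟩ := ly3_spec hy3
  exact noTripleHash_append'
    (noTripleHash_append'
      (noTripleHash_append'
        (noTripleHash_append' hy1n hx1n hx1h) hy2n hy2h) hx2n hx2h) hy3n hy3h
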